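/- For n = 5 the only induced odd cycles of length ≥ 5 in the noncrossing graph G₅ are 5-cycles on the chord sets equivalent to {12, 23, 34, 45, 15}; in particular, the second secant ideal of the edge ideal of G₅ is the principal ideal generated by x₁₂x₂₃x₃₄x₄₅x₁₅ together with its dihedral images, which for n = 5 is the single monomial ideal ⟨x₁₂x₂₃x₃₄x₄₅x₁₅⟩. -/

import Mathlib

open MvPolynomial

/-- A chord of the convex `n`-gon: a pair `i < j` of vertices. -/
def Chord (n : ℕ) := {p : Fin n × Fin n // p.1 < p.2}

/-- Two chords cross iff they share a vertex or interleave. -/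
def crosses {n : ℕ} (c d : Chord n) : Prop :=
  (c.1.1 = d.1.1 ∨ c.1.1 = d.1.2 ∨ c.1.2 = d.1.1 ∨ c.1.2 = d.1.2) ∨
  (c.1.1 < d.1.1 ∧ d.1.1 < c.1.2 ∧ c.1.2 < d.1.2) ∨
  (d.1.1 < c.1.1 ∧ c.1.1 < d.1.2 ∧ d.1.2 < c.1.2)

/-- The noncrossing graph `Gₙ`. -/
def noncrossingGraph (n : ℕ) : SimpleGraph (Chord n) where
  Adj c d := c ≠ d ∧ ¬ crosses c d
  symm := by
    constructor
    rintro c d ⟨hne, hcr⟩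
    refine ⟨hne.symm, fun h => hcr ?_⟩
    rcases h with (h | h | h | h) | h | h
    · exact Or.inl (Or.inl h.symm)
    · exact Or.inl (Or.inr <| Or.inr <| Or.inl h.symm)
    · exact Or.inl (Or.inr <| Or.inl h.symm)
    · exact Or.inl (Or.inr <| Or.inr <| Or.inr h.symm)
    · exact Or.inr (Or.inr h)
    · exact Or.inr (Or.inl h)
  loopless := by constructor; rintro c ⟨hne, -⟩; exact hne rfl

/-- The edge ideal of a graph, in variables indexed by the vertices. -/
noncomputable def edgeIdeal {V : Type*} (G : SimpleGraph V) :
    Ideal (MvPolynomial V ℂ) :=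
  Ideal.span {f | ∃ v w : V, G.Adj v w ∧ f = X v * X w}

/-- The second secant ideal, via the join construction. -/
noncomputable def secantIdeal2 {V : Type*} (I : Ideal (MvPolynomial V ℂ)) :
    Ideal (MvPolynomial V ℂ) :=
  Ideal.comap (rename (fun v : V => ((0 : Fin 3), v)) : _ →ₐ[ℂ] _)
    (Ideal.map (rename (fun v : V => ((1 : Fin 3), v)) : _ →ₐ[ℂ] _) I ⊔
     Ideal.map (rename (fun v : V => ((2 : Fin 3), v)) : _ →ₐ[ℂ] _) I ⊔
     Ideal.span {f | ∃ v : V, f = X (0, v) - X (1, v) - X (2, v)})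

instance : DecidableEq (Chord 5) :=
  inferInstanceAs (DecidableEq {p : Fin 5 × Fin 5 // p.1 < p.2})
instance : Fintype (Chord 5) :=
  inferInstanceAs (Fintype {p : Fin 5 × Fin 5 // p.1 < p.2})
instance {c d : Chord 5} : Decidable (crosses c d) := by
  unfold crosses; infer_instance
instance : DecidableRel (noncrossingGraph 5).Adj :=
  fun c d => inferInstanceAs (Decidable (c ≠ d ∧ ¬ crosses c d))

def c01 : Chord 5 := ⟨(0, 1), by decide⟩
def c12 : Chord 5 := ⟨(1, 2), by decide⟩
def c23 : Chord 5 := ⟨(2, 3), by decide⟩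
def c34 : Chord 5 := ⟨(3, 4), by decide⟩
def c04 : Chord 5 := ⟨(0, 4), by decide⟩

def pentagon : Finset (Chord 5) := {c01, c12, c23, c34, c04}

instance {S : Finset (Chord 5)} :
    DecidableRel ((noncrossingGraph 5).induce (↑S : Set (Chord 5))).Adj :=
  fun a b => inferInstanceAs (Decidable ((noncrossingGraph 5).Adj a.1 b.1))

lemma degree_from_iso {S : Finset (Chord 5)} {m : ℕ} (hm : 5 ≤ m)
    (e : (noncrossingGraph 5).induce (↑S : Set (Chord 5)) ≃g
      SimpleGraph.cycleGraph m) :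
    ∀ v ∈ S, (S.filter (fun w => (noncrossingGraph 5).Adj v w)).card = 2 := by
  intro v hv
  obtain ⟨k, rfl⟩ : ∃ k, m = k + 5 := ⟨m - 5, by omega⟩
  have hv' : v ∈ (↑S : Set (Chord 5)) := hv
  set H := (noncrossingGraph 5).induce (↑S : Set (Chord 5)) with hH
  have e' := e.mapNeighborSet ⟨v, hv'⟩
  -- card of cycle graph neighbor set
  set u := e ⟨v, hv'⟩ with hu
  have h1 : Nat.card ((SimpleGraph.cycleGraph (k + 5)).neighborSet u) = 2 := by
    have hns := SimpleGraph.cycleGraph_neighborSet (n := k + 3) (v := u)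
    rw [hns]
    have hne : u - 1 ≠ u + 1 := by
      intro h
      have h2 : u = u + 2 := by
        have := congrArg (· + 1) h
        simp only [sub_add_cancel, add_assoc, one_add_one_eq_two] at this; exact this
      have h3 : (2 : Fin (k + 5)) = 0 := by
        have := (left_eq_add).mp h2
        exact this
      have : ((2 : Fin (k + 5)) : ℕ) = 2 := by
        simp [Fin.val_two]
      rw [h3] at this
      simp at this
    exact Set.ncard_pair hne
  have h2 : Nat.card (H.neighborSet ⟨v, hv'⟩) = 2 := by
    rw [Nat.card_congr e'] ; exact h1
  -- transfer to filter card
  have e2 : (H.neighborSet ⟨v, hv'⟩) ≃ {w : Chord 5 // w ∈ S ∧ (noncrossingGraph 5).Adj v w} :=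
    { toFun := fun x => ⟨x.1.1, x.1.2, x.2⟩
      invFun := fun x => ⟨⟨x.1, x.2.1⟩, x.2.2⟩
      left_inv := fun x => rfl
      right_inv := fun x => rfl }
  rw [Nat.card_congr e2, Nat.card_eq_fintype_card, Fintype.card_subtype] at h2
  rw [← h2]
  congr 1
  ext w
  simp [and_comm]
lemma mem_pentagon_cases : ∀ v : Chord 5, v ∈ pentagon →
    v = c01 ∨ v = c12 ∨ v = c23 ∨ v = c34 ∨ v = c04 := by decide

lemma S_eq_pentagon {S : Finset (Chord 5)}
    (hdeg : ∀ v ∈ S, (S.filter (fun w => (noncrossingGraph 5).Adj v w)).card = 2)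
    (hne : S.Nonempty) : S = pentagon := by
  have hsub : S ⊆ pentagon := by
    intro v hv
    by_contra hvP
    have h1 : (Finset.univ.filter (fun w => (noncrossingGraph 5).Adj v w)).card ≤ 1 :=
      (by decide : ∀ v : Chord 5, v ∉ pentagon →
        (Finset.univ.filter (fun w => (noncrossingGraph 5).Adj v w)).card ≤ 1) v hvP
    have h2 := hdeg v hv
    have h3 := Finset.card_le_card
      (Finset.filter_subset_filter (fun w => (noncrossingGraph 5).Adj v w)
        (Finset.subset_univ S))
    omega
  have hpent2 : ∀ v ∈ pentagon,
      (pentagon.filter (fun w => (noncrossingGraph 5).Adj v w)).card = 2 := by decide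
  have K : ∀ x ∈ S, ∀ y ∈ pentagon.filter (fun w => (noncrossingGraph 5).Adj x w), y ∈ S := by
    intro v hv
    have h1 := Finset.filter_subset_filter (fun w => (noncrossingGraph 5).Adj v w) hsub
    have h4 := Finset.eq_of_subset_of_card_le h1
      (by rw [hdeg v hv, hpent2 v (hsub hv)])
    rw [← h4]
    exact fun y hy => Finset.filter_subset _ _ hy
  have hall : c01 ∈ S ∧ c12 ∈ S ∧ c23 ∈ S ∧ c34 ∈ S ∧ c04 ∈ S := by
    obtain ⟨v, hv⟩ := hne
    rcases mem_pentagon_cases v (hsub hv) with rfl | rfl | rfl | rfl | rfl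
    · have h23 := K _ hv c23 (by decide)
      have h34 := K _ hv c34 (by decide)
      exact ⟨hv, K _ h34 c12 (by decide), h23, h34, K _ h23 c04 (by decide)⟩
    · have h04 := K _ hv c04 (by decide)
      have h34 := K _ hv c34 (by decide)
      exact ⟨K _ h34 c01 (by decide), hv, K _ h04 c23 (by decide), h34, h04⟩
    · have h01 := K _ hv c01 (by decide)
      have h04 := K _ hv c04 (by decide)
      exact ⟨h01, K _ h04 c12 (by decide), hv, K _ h01 c34 (by decide), h04⟩
    · have h01 := K _ hv c01 (by decide)
      have h12 := K _ hv c12 (by decide)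
      exact ⟨h01, h12, K _ h01 c23 (by decide), hv, K _ h12 c04 (by decide)⟩
    · have h12 := K _ hv c12 (by decide)
      have h23 := K _ hv c23 (by decide)
      exact ⟨K _ h23 c01 (by decide), h12, h23, K _ h12 c34 (by decide), hv⟩
  obtain ⟨h1, h2, h3, h4, h5⟩ := hall
  refine Finset.Subset.antisymm hsub ?_
  intro w hw
  rcases mem_pentagon_cases w hw with rfl | rfl | rfl | rfl | rfl <;> assumption
lemma ring5 {R : Type*} [CommRing R] (a1 a2 a3 a4 a5 b1 b2 b3 b4 b5 : R)
    (ha13 : a1*a3 = 0) (hb13 : b1*b3 = 0) (ha14 : a1*a4 = 0) (hb14 : b1*b4 = 0) (ha24 : a2*a4 = 0) (hb24 : b2*b4 = 0) (ha25 : a2*a5 = 0) (hb25 : b2*b5 = 0) (ha35 : a3*a5 = 0) (hb35 : b3*b5 = 0) :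
    (a1+b1)*(a2+b2)*(a3+b3)*(a4+b4)*(a5+b5) = 0 := by
  linear_combination a2*a4*a5 * ha13 + a2*a4*b5 * ha13 + a2*b4*a5 * ha13 + a2*b4*b5 * ha13 + a2*b3*a5 * ha14 + a2*b3*b5 * ha14 + a1*b3*b4 * ha25 + a1*a2*b4 * hb35 + b2*a4*a5 * ha13 + b2*a4*b5 * ha13 + b2*b4*a5 * ha13 + b2*b4*b5 * ha13 + b2*b3*a5 * ha14 + b2*b3*b5 * ha14 + a1*b3*a5 * hb24 + a1*b3*b5 * hb24 + b1*a3*a5 * ha24 + b1*a3*b5 * ha24 + a2*a3*a5 * hb14 + a2*a3*b5 * hb14 + a2*a4*a5 * hb13 + a2*a4*b5 * hb13 + a2*b4*a5 * hb13 + a2*b4*b5 * hb13 + b1*b2*a4 * ha35 + b1*a3*a4 * hb25 + b2*a3*a5 * hb14 + b2*a3*b5 * hb14 + b2*a4*a5 * hb13 + b2*a4*b5 * hb13 + b2*b4*a5 * hb13 + b2*b4*b5 * hb13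
lemma gen_mem :
    (X c01 * X c12 * X c23 * X c34 * X c04 : MvPolynomial (Chord 5) ℂ) ∈
      secantIdeal2 (edgeIdeal (noncrossingGraph 5)) := by
  rw [secantIdeal2, Ideal.mem_comap]
  set J := (Ideal.map (rename (fun v : Chord 5 => ((1 : Fin 3), v)) : _ →ₐ[ℂ] _)
        (edgeIdeal (noncrossingGraph 5)) ⊔
      Ideal.map (rename (fun v : Chord 5 => ((2 : Fin 3), v)) : _ →ₐ[ℂ] _)
        (edgeIdeal (noncrossingGraph 5)) ⊔
      Ideal.span {f | ∃ v : Chord 5, f = X (0, v) - X (1, v) - X (2, v)}) with hJ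
  rw [← Ideal.Quotient.eq_zero_iff_mem]
  set q := Ideal.Quotient.mk J with hq
  have h0 : ∀ c : Chord 5, q (X (0, c)) = q (X (1, c)) + q (X (2, c)) := by
    intro c
    have hmem : (X (0, c) - X (1, c) - X (2, c) :
        MvPolynomial (Fin 3 × Chord 5) ℂ) ∈ J :=
      Ideal.mem_sup_right (Ideal.subset_span ⟨c, rfl⟩)
    have := (Ideal.Quotient.eq_zero_iff_mem).mpr hmem
    rw [map_sub, map_sub, sub_sub, sub_eq_zero] at this
    exact this
  have hedge : ∀ i : Fin 3, i = 1 ∨ i = 2 → ∀ u w : Chord 5,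
      (noncrossingGraph 5).Adj u w → q (X (i, u)) * q (X (i, w)) = 0 := by
    intro i hi u w hadj
    have hmem : (X (i, u) * X (i, w) : MvPolynomial (Fin 3 × Chord 5) ℂ) ∈ J := by
      have h1 : (X u * X w : MvPolynomial (Chord 5) ℂ) ∈
          edgeIdeal (noncrossingGraph 5) := Ideal.subset_span ⟨u, w, hadj, rfl⟩
      have h2 := Ideal.mem_map_of_mem
        (rename (fun v : Chord 5 => ((i : Fin 3), v)) : _ →ₐ[ℂ] _) h1
      rw [map_mul, rename_X, rename_X] at h2
      rcases hi with rfl | rfl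
      · exact Ideal.mem_sup_left (Ideal.mem_sup_left h2)
      · exact Ideal.mem_sup_left (Ideal.mem_sup_right h2)
    rw [← map_mul]
    exact (Ideal.Quotient.eq_zero_iff_mem).mpr hmem
  simp only [map_mul, rename_X]
  rw [h0, h0, h0, h0, h0]
  exact ring5 _ _ _ _ _ _ _ _ _ _
    (hedge 1 (Or.inl rfl) c01 c23 (by decide)) (hedge 2 (Or.inr rfl) c01 c23 (by decide))
    (hedge 1 (Or.inl rfl) c01 c34 (by decide)) (hedge 2 (Or.inr rfl) c01 c34 (by decide))
    (hedge 1 (Or.inl rfl) c12 c34 (by decide)) (hedge 2 (Or.inr rfl) c12 c34 (by decide))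
    (hedge 1 (Or.inl rfl) c12 c04 (by decide)) (hedge 2 (Or.inr rfl) c12 c04 (by decide))
    (hedge 1 (Or.inl rfl) c23 c04 (by decide)) (hedge 2 (Or.inr rfl) c23 c04 (by decide))
lemma key (c₀ : Chord 5) (χ : Chord 5 → Fin 3)
    (hχ0 : ∀ v, χ v = 0 ↔ v = c₀)
    (hχ1 : ∀ u w : Chord 5, (noncrossingGraph 5).Adj u w → ¬(χ u = 1 ∧ χ w = 1))
    (hχ2 : ∀ u w : Chord 5, (noncrossingGraph 5).Adj u w → ¬(χ u = 2 ∧ χ w = 2))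
    {f : MvPolynomial (Chord 5) ℂ}
    (hf : f ∈ secantIdeal2 (edgeIdeal (noncrossingGraph 5))) :
    f ∈ Ideal.span {(X c₀ : MvPolynomial (Chord 5) ℂ)} := by
  classical
  set g : Fin 3 × Chord 5 → MvPolynomial (Chord 5) ℂ := fun p =>
    if p.1 = 0 then (if p.2 = c₀ then 0 else X p.2)
    else if χ p.2 = p.1 then X p.2 else 0 with hg
  set ψ : MvPolynomial (Fin 3 × Chord 5) ℂ →ₐ[ℂ] MvPolynomial (Chord 5) ℂ :=
    aeval g with hψ
  have fin3 : ∀ x : Fin 3, x = 0 ∨ x = 1 ∨ x = 2 := by decide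
  -- ψ kills J
  have hker : (Ideal.map (rename (fun v : Chord 5 => ((1 : Fin 3), v)) : _ →ₐ[ℂ] _)
        (edgeIdeal (noncrossingGraph 5)) ⊔
      Ideal.map (rename (fun v : Chord 5 => ((2 : Fin 3), v)) : _ →ₐ[ℂ] _)
        (edgeIdeal (noncrossingGraph 5)) ⊔
      Ideal.span {h | ∃ v : Chord 5, h = X (0, v) - X (1, v) - X (2, v)}) ≤
      RingHom.ker ψ.toRingHom := by
    refine sup_le (sup_le ?_ ?_) ?_
    · rw [Ideal.map_le_iff_le_comap, edgeIdeal, Ideal.span_le]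
      rintro _ ⟨u, w, hadj, rfl⟩
      simp only [Ideal.mem_comap, RingHom.mem_ker, AlgHom.toRingHom_eq_coe,
        RingHom.coe_coe, map_mul, rename_X, hψ, aeval_X]
      rcases fin3 (χ u) with hu | hu | hu
      · simp [hg, hu]
      · rcases fin3 (χ w) with hw | hw | hw
        · simp [hg, hw]
        · exact absurd ⟨hu, hw⟩ (hχ1 u w hadj)
        · simp [hg, hw]
      · simp [hg, hu]
    · rw [Ideal.map_le_iff_le_comap, edgeIdeal, Ideal.span_le]
      rintro _ ⟨u, w, hadj, rfl⟩
      simp only [Ideal.mem_comap, RingHom.mem_ker, AlgHom.toRingHom_eq_coe,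
        RingHom.coe_coe, map_mul, rename_X, hψ, aeval_X]
      rcases fin3 (χ u) with hu | hu | hu
      · simp [hg, hu]
      · simp [hg, hu]
      · rcases fin3 (χ w) with hw | hw | hw
        · simp [hg, hw]
        · simp [hg, hw]
        · exact absurd ⟨hu, hw⟩ (hχ2 u w hadj)
    · rw [Ideal.span_le]
      rintro _ ⟨v, rfl⟩
      simp only [RingHom.mem_ker, AlgHom.toRingHom_eq_coe, RingHom.coe_coe,
        map_sub, hψ, aeval_X, SetLike.mem_coe]
      by_cases hv : v = c₀
      · have h0 : χ v = 0 := (hχ0 v).mpr hv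
        rw [hv] at h0 ⊢
        simp [hg, h0]
      · have h0 : χ v ≠ 0 := fun h => hv ((hχ0 v).mp h)
        rcases fin3 (χ v) with h | h | h
        · exact absurd h h0
        · simp [hg, hv, h]
        · simp [hg, hv, h]
  have hval : ψ (rename (fun v : Chord 5 => ((0 : Fin 3), v)) f) = 0 := by
    rw [secantIdeal2, Ideal.mem_comap] at hf
    exact hker hf
  rw [hψ, aeval_rename] at hval
  -- congruence mod (X c₀)
  set I₀ := Ideal.span {(X c₀ : MvPolynomial (Chord 5) ℂ)} with hI₀
  have hmk : ∀ p : MvPolynomial (Chord 5) ℂ,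
      Ideal.Quotient.mkₐ ℂ I₀ (aeval (g ∘ fun v : Chord 5 => ((0 : Fin 3), v)) p) =
        Ideal.Quotient.mkₐ ℂ I₀ p := by
    intro p
    have := MvPolynomial.algHom_ext (f := (Ideal.Quotient.mkₐ ℂ I₀).comp
        (aeval (g ∘ fun v : Chord 5 => ((0 : Fin 3), v))))
      (g := Ideal.Quotient.mkₐ ℂ I₀) ?_
    · exact congrFun (congrArg DFunLike.coe this) p
    · intro v
      simp only [AlgHom.comp_apply, aeval_X, Function.comp]
      by_cases hv : v = c₀
      · have hz : Ideal.Quotient.mkₐ ℂ I₀ (X c₀ : MvPolynomial (Chord 5) ℂ) = 0 := by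
          rw [Ideal.Quotient.mkₐ_eq_mk]
          exact (Ideal.Quotient.eq_zero_iff_mem).mpr
            (Ideal.subset_span (Set.mem_singleton _))
        rw [hv] at *
        simp [hg, hz]
      · simp [hg, hv]
  have := hmk f
  rw [hval, map_zero] at this
  have h0 : Ideal.Quotient.mk I₀ f = 0 := this.symm
  exact (Ideal.Quotient.eq_zero_iff_mem).mp h0
def d02 : Chord 5 := ⟨(0, 2), by decide⟩
def d03 : Chord 5 := ⟨(0, 3), by decide⟩
def d13 : Chord 5 := ⟨(1, 3), by decide⟩
def d14 : Chord 5 := ⟨(1, 4), by decide⟩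
def d24 : Chord 5 := ⟨(2, 4), by decide⟩

def A1 : Finset (Chord 5) := {c23, c12, d13, d02, d24}
def A2 : Finset (Chord 5) := {c34, c23, d24, d13, d03}
def A3 : Finset (Chord 5) := {c04, c34, d03, d24, d14}
def A4 : Finset (Chord 5) := {c01, c04, d14, d03, d02}
def A5 : Finset (Chord 5) := {c12, c01, d02, d14, d13}

def chi (c₀ : Chord 5) (A : Finset (Chord 5)) (c : Chord 5) : Fin 3 :=
  if c = c₀ then 0 else if c ∈ A then 1 else 2

lemma support_ne {f : MvPolynomial (Chord 5) ℂ} {c : Chord 5}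
    (hc : f ∈ Ideal.span {(X c : MvPolynomial (Chord 5) ℂ)}) :
    ∀ α ∈ f.support, α c ≠ 0 := by
  intro α hα
  rw [← Set.image_singleton] at hc
  obtain ⟨i, hi, hne⟩ := mem_ideal_span_X_image.mp hc α hα
  rwa [Set.mem_singleton_iff.mp hi] at hne

lemma subset_dir {f : MvPolynomial (Chord 5) ℂ}
    (hf : f ∈ secantIdeal2 (edgeIdeal (noncrossingGraph 5))) :
    f ∈ Ideal.span {(X c01 * X c12 * X c23 * X c34 * X c04 :
      MvPolynomial (Chord 5) ℂ)} := by
  have h1 := support_ne (key c01 (chi c01 A1) (by decide) (by decide) (by decide) hf)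
  have h2 := support_ne (key c12 (chi c12 A2) (by decide) (by decide) (by decide) hf)
  have h3 := support_ne (key c23 (chi c23 A3) (by decide) (by decide) (by decide) hf)
  have h4 := support_ne (key c34 (chi c34 A4) (by decide) (by decide) (by decide) hf)
  have h5 := support_ne (key c04 (chi c04 A5) (by decide) (by decide) (by decide) hf)
  set s₀ : Chord 5 →₀ ℕ := Finsupp.single c01 1 + Finsupp.single c12 1 +
    Finsupp.single c23 1 + Finsupp.single c34 1 + Finsupp.single c04 1 with hs₀
  have hmono : (X c01 * X c12 * X c23 * X c34 * X c04 :
      MvPolynomial (Chord 5) ℂ) = monomial s₀ 1 := by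
    rw [hs₀]
    rw [show (X c01 : MvPolynomial (Chord 5) ℂ) = monomial (Finsupp.single c01 1) 1 from rfl,
      show (X c12 : MvPolynomial (Chord 5) ℂ) = monomial (Finsupp.single c12 1) 1 from rfl,
      show (X c23 : MvPolynomial (Chord 5) ℂ) = monomial (Finsupp.single c23 1) 1 from rfl,
      show (X c34 : MvPolynomial (Chord 5) ℂ) = monomial (Finsupp.single c34 1) 1 from rfl,
      show (X c04 : MvPolynomial (Chord 5) ℂ) = monomial (Finsupp.single c04 1) 1 from rfl,
      monomial_mul, monomial_mul, monomial_mul, monomial_mul]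
    norm_num
  rw [hmono, (Set.image_singleton (f := fun s => monomial s (1:ℂ)) (a := s₀)).symm]
  refine mem_ideal_span_monomial_image.mpr fun α hα => ⟨s₀, rfl, ?_⟩
  have hsup : s₀.support ⊆ pentagon := by
    rw [hs₀]
    refine subset_trans Finsupp.support_add ?_
    refine Finset.union_subset (subset_trans Finsupp.support_add ?_) ?_
    · refine Finset.union_subset (subset_trans Finsupp.support_add ?_) ?_
      · refine Finset.union_subset (subset_trans Finsupp.support_add ?_) ?_
        · exact Finset.union_subset
            (subset_trans Finsupp.support_single_subset (by decide))
            (subset_trans Finsupp.support_single_subset (by decide))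
        · exact subset_trans Finsupp.support_single_subset (by decide)
      · exact subset_trans Finsupp.support_single_subset (by decide)
    · exact subset_trans Finsupp.support_single_subset (by decide)
  rw [Finsupp.le_iff' s₀ α hsup]
  intro i hi
  rcases mem_pentagon_cases i hi with rfl | rfl | rfl | rfl | rfl
  · have : s₀ c01 = 1 := by
      simp [hs₀, Finsupp.single_apply]
      decide
    rw [this]; exact Nat.one_le_iff_ne_zero.mpr (h1 α hα)
  · have : s₀ c12 = 1 := by
      simp [hs₀, Finsupp.single_apply]
      decide
    rw [this]; exact Nat.one_le_iff_ne_zero.mpr (h2 α hα)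
  · have : s₀ c23 = 1 := by
      simp [hs₀, Finsupp.single_apply]
      decide
    rw [this]; exact Nat.one_le_iff_ne_zero.mpr (h3 α hα)
  · have : s₀ c34 = 1 := by
      simp [hs₀, Finsupp.single_apply]
      decide
    rw [this]; exact Nat.one_le_iff_ne_zero.mpr (h4 α hα)
  · have : s₀ c04 = 1 := by
      simp [hs₀, Finsupp.single_apply]
      decide
    rw [this]; exact Nat.one_le_iff_ne_zero.mpr (h5 α hα)
set_option maxHeartbeats 1000000 in
/-- For `n = 5`: the only induced odd cycles of length `≥ 5` in the noncrossing
graph `G₅` are the 5-cycles on the pentagon chord set `{12,23,34,45,15}`, and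
the second secant ideal of the edge ideal of `G₅` is the principal monomial
ideal `⟨x₁₂x₂₃x₃₄x₄₅x₁₅⟩`. -/
theorem noncrossingGraph_five_secant :
    (∀ S : Finset (Chord 5),
      (∃ m : ℕ, Odd m ∧ 5 ≤ m ∧
        Nonempty ((noncrossingGraph 5).induce (↑S : Set (Chord 5)) ≃g
          SimpleGraph.cycleGraph m)) →
      (↑S : Set (Chord 5)) =
        {c : Chord 5 | ∃ l : Fin 5,
          ({c.1.1, c.1.2} : Finset (Fin 5)) = {l, l + 1}}) ∧
    secantIdeal2 (edgeIdeal (noncrossingGraph 5)) =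
      Ideal.span {X (⟨(0, 1), by decide⟩ : Chord 5) *
        X (⟨(1, 2), by decide⟩ : Chord 5) * X (⟨(2, 3), by decide⟩ : Chord 5) *
        X (⟨(3, 4), by decide⟩ : Chord 5) * X (⟨(0, 4), by decide⟩ : Chord 5)} := by
  constructor
  · rintro S ⟨m, hodd, hm, ⟨e⟩⟩
    have hne : S.Nonempty := by
      have u : Fin m := ⟨0, by omega⟩
      exact ⟨(e.symm u).1, (e.symm u).2⟩
    have hS := S_eq_pentagon (degree_from_iso hm e) hne
    subst hS
    ext c
    exact (by decide : ∀ c : Chord 5, c ∈ pentagon ↔ ∃ l : Fin 5,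
      ({c.1.1, c.1.2} : Finset (Fin 5)) = {l, l + 1}) c
  · apply le_antisymm
    · intro f hf
      exact subset_dir hf
    · rw [Ideal.span_le, Set.singleton_subset_iff]
      exact gen_mem
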